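/- Let n ≥ 1 and let γ ∈ H(K_n × K_n) satisfy H(pr_1)(γ) = e_{K_n}(β) and H(pr_2)(γ) = e_{K_n}(β). Then supp γ is contained in the diagonal {(i, i) : i = 1, …, n} of K_n × K_n. -/

import Mathlib

open scoped Topology

/-- The index set `S(X)`: triples `(φ, a, b)` with `φ : X → ℝ` continuous and
`0 ≤ a < b ≤ 1`. -/
structure SIdx (X : Type u) [TopologicalSpace X] : Type u where
  φ : C(X, ℝ)
  a : ℝ
  b : ℝ
  ha : 0 ≤ a
  hab : a < b
  hb : b ≤ 1

/-- `α : ℝ → X` is a step function on `[0,1)`: there is a partition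
`0 = t 0 < t 1 < ⋯ < t k = 1` with `α` constant on each `[t j, t (j+1))`. -/
def IsStep {X : Type u} (α : ℝ → X) : Prop :=
  ∃ (k : ℕ) (t : ℕ → ℝ), 1 ≤ k ∧ t 0 = 0 ∧ t k = 1 ∧ (∀ j < k, t j < t (j + 1)) ∧
    ∀ j < k, ∀ s ∈ Set.Ico (t j) (t (j + 1)), α s = α (t j)

/-- The embedding `e_X`, sending `α` to the point of `∏_{S(X)} ℝ` whose
`(φ, a, b)`-coordinate is `(1/(b-a)) ∫_a^b φ(α t) dt`. -/
noncomputable def eHM {X : Type u} [TopologicalSpace X] (α : ℝ → X) : SIdx X → ℝ :=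
  fun s => (1 / (s.b - s.a)) * ∫ t in s.a..s.b, s.φ (α t)

/-- `H(X)` as a subset of `∏_{S(X)} ℝ`: the closure of the image under `e_X`
of the set of step functions. -/
def HSet (X : Type u) [TopologicalSpace X] : Set (SIdx X → ℝ) :=
  closure (eHM '' {α : ℝ → X | IsStep α})

/-- `H(X)` as a topological space (subspace of the product `∏_{S(X)} ℝ`). -/
abbrev HSp (X : Type u) [TopologicalSpace X] : Type u := ↥(HSet X)

/-- `H_X(A)`: the closure of the image under `e_X` of the step functions taking
values in `A` on `[0,1)`. -/
def HSetOn (X : Type u) [TopologicalSpace X] (A : Set X) : Set (SIdx X → ℝ) :=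
  closure (eHM '' {α : ℝ → X | IsStep α ∧ ∀ t ∈ Set.Ico (0:ℝ) 1, α t ∈ A})

/-- The support of `ν`: the intersection of all closed `A ⊆ X` with `ν ∈ H_X(A)`. -/
def suppH {X : Type u} [TopologicalSpace X] (ν : SIdx X → ℝ) : Set X :=
  ⋂₀ {A : Set X | IsClosed A ∧ ν ∈ HSetOn X A}

/-- The reindexing map `R_f : ∏_{S(X)} ℝ → ∏_{S(Y)} ℝ`, `R_f x (ψ,a,b) = x (ψ∘f,a,b)`. -/
def reindex {X : Type u} {Y : Type v} [TopologicalSpace X] [TopologicalSpace Y]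
    (f : C(X, Y)) : (SIdx X → ℝ) → (SIdx Y → ℝ) :=
  fun x s => x ⟨s.φ.comp f, s.a, s.b, s.ha, s.hab, s.hb⟩

lemma isStep_comp {X : Type u} {Y : Type v} (f : X → Y) {α : ℝ → X} (h : IsStep α) :
    IsStep (f ∘ α) := by
  obtain ⟨k, t, hk, h0, h1, hm, hc⟩ := h
  exact ⟨k, t, hk, h0, h1, hm, fun j hj s hs => congrArg f (hc j hj s hs)⟩

lemma isStep_const {X : Type u} (x : X) : IsStep (fun _ : ℝ => x) :=
  ⟨1, fun j => (j : ℝ), le_refl 1, by simp, by simp,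
    fun j _ => by simp, fun _ _ _ _ => rfl⟩

/-- The point `e_X(α)` of `H(X)`, for a step function `α`. -/
noncomputable def toH {X : Type u} [TopologicalSpace X] (α : ℝ → X) (h : IsStep α) : HSp X :=
  ⟨eHM α, subset_closure ⟨α, h, rfl⟩⟩

lemma continuous_reindex {X : Type u} {Y : Type v} [TopologicalSpace X] [TopologicalSpace Y]
    (f : C(X, Y)) : Continuous (reindex f) :=
  continuous_pi fun _ => continuous_apply _

lemma reindex_mapsTo {X : Type u} {Y : Type v} [TopologicalSpace X] [TopologicalSpace Y]
    (f : C(X, Y)) : Set.MapsTo (reindex f) (HSet X) (HSet Y) := by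
  intro x hx
  have h2 := image_closure_subset_closure_image (s := eHM '' {α : ℝ → X | IsStep α})
    (continuous_reindex f)
  have h3 : reindex f '' (eHM '' {α : ℝ → X | IsStep α}) ⊆ eHM '' {α : ℝ → Y | IsStep α} := by
    rintro _ ⟨_, ⟨α, hα, rfl⟩, rfl⟩
    exact ⟨f ∘ α, isStep_comp f hα, rfl⟩
  exact closure_mono h3 (h2 ⟨x, hx, rfl⟩)

/-- The map `H(f) : H(X) → H(Y)` induced by a continuous `f : X → Y`, i.e. the
restriction of the reindexing map `R_f`. -/
noncomputable def Hmap {X : Type u} {Y : Type v} [TopologicalSpace X] [TopologicalSpace Y]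
    (f : C(X, Y)) : C(HSp X, HSp Y) where
  toFun x := ⟨reindex f x.1, reindex_mapsTo f x.2⟩
  continuous_toFun :=
    Continuous.subtype_mk ((continuous_reindex f).comp continuous_subtype_val) _

/-- The unit `η_X : X → H(X)`, `x ↦ e_X(const x)`. -/
noncomputable def etaMap (X : Type u) [TopologicalSpace X] : C(X, HSp X) where
  toFun x := toH (fun _ : ℝ => x) (isStep_const x)
  continuous_toFun := by
    refine Continuous.subtype_mk (continuous_pi fun s => ?_) _
    simp only [eHM, intervalIntegral.integral_const]
    exact continuous_const.mul ((s.φ.continuous).const_smul (s.b - s.a))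
/-- The index (0-based) of the subinterval `[i/n, (i+1)/n)` of `[0,1)` containing `s`
(as a natural number, clipped to `n - 1`). -/
noncomputable def stepIdxNat (n : ℕ) (s : ℝ) : ℕ := min ⌊s * n⌋₊ (n - 1)

lemma stepIdxNat_eq {n j : ℕ} (hj : j < n) {s : ℝ}
    (h1 : (j : ℝ) / n ≤ s) (h2 : s < ((j : ℝ) + 1) / n) : stepIdxNat n s = j := by
  have hn : (0:ℝ) < n := by
    have : 0 < n := by omega
    exact_mod_cast this
  have h1' : (j : ℝ) ≤ s * n := by rw [div_le_iff₀ hn] at h1; exact h1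
  have h2' : s * n < (j : ℝ) + 1 := by rw [lt_div_iff₀ hn] at h2; exact h2
  have hfl : ⌊s * n⌋₊ = j := by
    rw [Nat.floor_eq_iff (le_trans (Nat.cast_nonneg j) h1')]
    exact ⟨h1', h2'⟩
  unfold stepIdxNat
  omega

lemma isStep_stepIdxNat (n : ℕ) : IsStep (stepIdxNat n) := by
  rcases Nat.eq_zero_or_pos n with rfl | hn
  · exact ⟨1, fun j => (j : ℝ), le_refl 1, by simp, by simp, fun j _ => by simp,
      fun j hj s hs => by simp [stepIdxNat]⟩
  · have hnR : (0:ℝ) < n := by exact_mod_cast hn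
    refine ⟨n, fun j => (j : ℝ) / n, hn, by simp, by field_simp,
      fun j hj => ?_, fun j hj s hs => ?_⟩
    · exact (div_lt_div_iff_of_pos_right hnR).mpr (by push_cast; linarith)
    · obtain ⟨hs1, hs2⟩ := hs
      have hs2' : s < ((j : ℝ) + 1) / n := by
        simpa using hs2
      rw [stepIdxNat_eq hj hs1 hs2',
        stepIdxNat_eq hj (le_refl _) ((div_lt_div_iff_of_pos_right hnR).mpr (by linarith))]
/-- The step function `β : [0,1) → K_n`, `β(s) = i` for `s ∈ [i/n, (i+1)/n)`,
with `K_n` realized as `Fin n` (0-based indexing). -/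
noncomputable def stepIdx (n : ℕ) [NeZero n] (s : ℝ) : Fin n :=
  ⟨stepIdxNat n s, by
    have := NeZero.ne n
    unfold stepIdxNat
    omega⟩

lemma isStep_stepIdx (n : ℕ) [NeZero n] : IsStep (stepIdx n) := by
  have hn := NeZero.ne n
  have h : stepIdx n =
      (fun m : ℕ => (⟨min m (n - 1), by omega⟩ : Fin n)) ∘ stepIdxNat n := by
    funext s
    apply Fin.ext
    simp [stepIdx, stepIdxNat, min_assoc]
  rw [h]
  exact isStep_comp _ (isStep_stepIdxNat n)

/-- The diagonal step function `α : [0,1) → K_n × K_n`, `α(s) = (i,i)` for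
`s ∈ [i/n, (i+1)/n)`. -/
noncomputable def alphaDiag (n : ℕ) [NeZero n] : ℝ → Fin n × Fin n :=
  fun s => (stepIdx n s, stepIdx n s)

lemma isStep_alphaDiag (n : ℕ) [NeZero n] : IsStep (alphaDiag n) :=
  isStep_comp (fun i : Fin n => (i, i)) (isStep_stepIdx n)

/-- The step function `α_i : [0,1) → K_n × K_n`, `α_i(s) = (i,j)` for
`s ∈ [j/n, (j+1)/n)`. -/
noncomputable def alphaRow (n : ℕ) [NeZero n] (i : Fin n) : ℝ → Fin n × Fin n :=
  fun s => (i, stepIdx n s)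

lemma isStep_alphaRow (n : ℕ) [NeZero n] (i : Fin n) : IsStep (alphaRow n i) :=
  isStep_comp (fun j : Fin n => (i, j)) (isStep_stepIdx n)

/-- The step function `A_n : [0,1) → H(K_n × K_n)`, `A_n(s) = e(α_i)` for
`s ∈ [i/n, (i+1)/n)`. -/
noncomputable def An (n : ℕ) [NeZero n] : ℝ → HSp (Fin n × Fin n) :=
  fun s => toH (alphaRow n (stepIdx n s)) (isStep_alphaRow n _)

lemma isStep_An (n : ℕ) [NeZero n] : IsStep (An n) :=
  isStep_comp (fun i : Fin n => toH (alphaRow n i) (isStep_alphaRow n i)) (isStep_stepIdx n)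

/-- The step function `γ_i^{(n)} : [0,1) → D = {0,1}` which is `1` on
`[i/n, (i+1)/n)` and `0` elsewhere, with `D` realized as `Bool`. -/
noncomputable def gammaStep (n i : ℕ) : ℝ → Bool := fun s => decide (stepIdxNat n s = i)

lemma isStep_gammaStep (n i : ℕ) : IsStep (gammaStep n i) :=
  isStep_comp (fun m : ℕ => decide (m = i)) (isStep_stepIdxNat n)

/-- The step function `B_n : [0,1) → H(D)`, `B_n(s) = e(γ_i^{(n)})` for
`s ∈ [i/n, (i+1)/n)`. -/
noncomputable def Bn (n : ℕ) : ℝ → HSp Bool :=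
  fun s => toH (gammaStep n (stepIdxNat n s)) (isStep_gammaStep n _)

lemma isStep_Bn (n : ℕ) : IsStep (Bn n) :=
  isStep_comp (fun m : ℕ => toH (gammaStep n m) (isStep_gammaStep n m)) (isStep_stepIdxNat n)

/-! ### Auxiliary lemmas for the main theorem -/

open MeasureTheory in
lemma myAe_ne (b : ℝ) : ∀ᵐ t : ℝ, t ≠ b := by
  rw [MeasureTheory.ae_iff]
  have : {t : ℝ | ¬ t ≠ b} = {b} := by ext x; simp
  rw [this]
  exact Real.volume_singleton

lemma stepT_mono {k : ℕ} {t : ℕ → ℝ} (hm : ∀ j < k, t j < t (j + 1)) :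
    ∀ {i j : ℕ}, i ≤ j → j ≤ k → t i ≤ t j := by
  intro i j hij hjk
  induction j with
  | zero => interval_cases i; exact le_refl _
  | succ m ih =>
    rcases Nat.eq_or_lt_of_le hij with rfl | h
    · exact le_refl _
    · have h1 := ih (by omega) (by omega)
      have h2 := hm m (by omega)
      linarith

/-- Existence (and effective uniqueness) of the cell of a partition containing `s`. -/
lemma exists_step_cell {k : ℕ} {t : ℕ → ℝ} (hk : 1 ≤ k) (h0 : t 0 = 0) (h1 : t k = 1)
    (hm : ∀ j < k, t j < t (j + 1)) {s : ℝ} (hs : s ∈ Set.Ico (0 : ℝ) 1) :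
    ∃ j < k, s ∈ Set.Ico (t j) (t (j + 1)) ∧
      ∀ i < k, i ≠ j → s ∉ Set.Ico (t i) (t (i + 1)) := by
  classical
  set J := (Finset.range k).filter (fun j => t j ≤ s) with hJ
  have h0J : 0 ∈ J := by
    simp only [hJ, Finset.mem_filter, Finset.mem_range]
    exact ⟨by omega, h0 ▸ hs.1⟩
  have hJne : J.Nonempty := ⟨0, h0J⟩
  set j := J.max' hJne with hj
  have hjmem : j ∈ J := J.max'_mem hJne
  have hjk : j < k := (Finset.mem_filter.1 hjmem).1 |> Finset.mem_range.1
  have hjle : t j ≤ s := (Finset.mem_filter.1 hjmem).2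
  have hlt : s < t (j + 1) := by
    by_contra hcon
    push_neg at hcon
    rcases Nat.lt_or_ge (j + 1) k with h' | h'
    · have : j + 1 ∈ J := by
        simp only [hJ, Finset.mem_filter, Finset.mem_range]
        exact ⟨h', hcon⟩
      have := J.le_max' _ this
      omega
    · have : j + 1 = k := by omega
      rw [this, h1] at hcon
      exact absurd hs.2 (not_lt.2 hcon)
  refine ⟨j, hjk, ⟨hjle, hlt⟩, ?_⟩
  intro i hi hij hmem
  rcases Nat.lt_or_ge i j with h' | h'
  · have : t (i + 1) ≤ t j := stepT_mono hm (by omega) (by omega)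
    exact absurd hmem.2 (not_lt.2 (le_trans this hjle))
  · have hij' : j < i := by omega
    have : t (j + 1) ≤ t i := stepT_mono hm (by omega) (by omega)
    exact absurd hmem.1 (not_le.2 (lt_of_lt_of_le hlt this))

open MeasureTheory in
/-- A step function composed with a continuous map is interval integrable on
subintervals of `[0,1]`. -/
lemma isStep_intervalIntegrable {X : Type u} [TopologicalSpace X] {α : ℝ → X}
    (h : IsStep α) (φ : C(X, ℝ)) {a b : ℝ} (ha : 0 ≤ a) (ha1 : a ≤ 1)
    (hb : 0 ≤ b) (hb1 : b ≤ 1) :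
    IntervalIntegrable (fun t => φ (α t)) volume a b := by
  classical
  obtain ⟨k, t, hk, h0, h1, hm, hc⟩ := h
  set g : ℝ → ℝ := fun s =>
    ∑ j ∈ Finset.range k, Set.indicator (Set.Ico (t j) (t (j + 1))) (fun _ => φ (α (t j))) s
    with hg
  rw [intervalIntegrable_iff]
  have hgint : IntegrableOn g (Set.uIoc a b) volume := by
    apply integrable_finset_sum
    intro j _
    refine (integrable_indicator_iff measurableSet_Ico).2 (integrableOn_const (ne_of_lt ?_) (by simp))
    calc (volume.restrict (Set.uIoc a b)) (Set.Ico (t j) (t (j + 1)))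
        ≤ volume (Set.Ico (t j) (t (j + 1))) := Measure.restrict_le_self _
      _ < ⊤ := by rw [Real.volume_Ico]; exact ENNReal.ofReal_lt_top
  have hfg : g =ᵐ[volume.restrict (Set.uIoc a b)] fun t => φ (α t) := by
    have hsub : Set.uIoc a b ⊆ Set.Ioc 0 1 :=
      Set.Ioc_subset_Ioc (le_min ha hb) (max_le ha1 hb1)
    rw [Filter.EventuallyEq, MeasureTheory.ae_restrict_iff' measurableSet_uIoc]
    filter_upwards [myAe_ne 1] with s hs1 hsmem
    have hs01 : s ∈ Set.Ico (0 : ℝ) 1 := by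
      have h' := hsub hsmem
      exact ⟨h'.1.le, lt_of_le_of_ne h'.2 hs1⟩
    obtain ⟨j, hjk, hj, huniq⟩ := exists_step_cell hk h0 h1 hm hs01
    have hgs : g s = φ (α (t j)) := by
      have hgs' : g s = ∑ i ∈ Finset.range k,
          (Set.Ico (t i) (t (i + 1))).indicator (fun _ => φ (α (t i))) s := rfl
      rw [hgs', Finset.sum_eq_single j]
      · exact Set.indicator_of_mem hj _
      · intro i hi hij
        exact Set.indicator_of_notMem (huniq i (Finset.mem_range.1 hi) hij) _
      · intro hcon
        exact absurd (Finset.mem_range.2 hjk) hcon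
    simp only [hgs, hc j hjk s hj]
  exact hgint.congr hfg

open MeasureTheory in
/-- Integral of a function constant on `[a,b)`. -/
lemma integral_eq_of_eqOn_Ico {f : ℝ → ℝ} {a b c : ℝ} (hab : a ≤ b)
    (h : ∀ t ∈ Set.Ico a b, f t = c) : ∫ t in a..b, f t = (b - a) * c := by
  rw [intervalIntegral.integral_of_le hab]
  have heq : ∫ t in Set.Ioc a b, f t = ∫ t in Set.Ioc a b, c := by
    apply setIntegral_congr_ae measurableSet_Ioc
    filter_upwards [myAe_ne b] with s hs hsmem
    exact h s ⟨hsmem.1.le, lt_of_le_of_ne hsmem.2 hs⟩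
  rw [heq, setIntegral_const, measureReal_def, Real.volume_Ioc, ENNReal.toReal_ofReal (by linarith)]
  simp [smul_eq_mul]

/-- The indicator of a point, as a continuous map on a discrete space. -/
noncomputable def indC {X : Type u} [TopologicalSpace X] [DiscreteTopology X] [DecidableEq X]
    (p : X) : C(X, ℝ) :=
  ⟨fun x => if x = p then 1 else 0, continuous_of_discreteTopology⟩

lemma indC_nonneg {X : Type u} [TopologicalSpace X] [DiscreteTopology X] [DecidableEq X]
    (p x : X) : 0 ≤ indC p x := by
  dsimp [indC]; split_ifs <;> norm_num

open MeasureTheory in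
/-- Elements of `H(X)` (for finite discrete `X`) are linear over point indicators. -/
lemma HSet_linear {X : Type u} [TopologicalSpace X] [DiscreteTopology X] [Fintype X]
    [DecidableEq X] {γ : SIdx X → ℝ} (hγ : γ ∈ HSet X) (s : SIdx X) :
    γ s = ∑ p : X, s.φ p * γ ⟨indC p, s.a, s.b, s.ha, s.hab, s.hb⟩ := by
  have hcl : IsClosed {x : SIdx X → ℝ |
      x s = ∑ p : X, s.φ p * x ⟨indC p, s.a, s.b, s.ha, s.hab, s.hb⟩} :=
    isClosed_eq (continuous_apply s)
      (continuous_finset_sum _ fun p _ => continuous_const.mul (continuous_apply _))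
  refine closure_minimal ?_ hcl hγ
  rintro _ ⟨α, hα, rfl⟩
  have hint : ∀ p : X, IntervalIntegrable (fun t => (indC p) (α t)) volume s.a s.b :=
    fun p => isStep_intervalIntegrable hα (indC p) s.ha (s.hab.le.trans s.hb)
      (s.ha.trans s.hab.le) s.hb
  have hpt : ∀ t : ℝ, s.φ (α t) = ∑ p : X, s.φ p * (indC p) (α t) := by
    intro t
    have : ∀ p : X, s.φ p * (indC p) (α t) = if α t = p then s.φ p else 0 := by
      intro p; by_cases h : α t = p <;> simp [indC, h]
    rw [Finset.sum_congr rfl fun p _ => this p, Finset.sum_ite_eq]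
    simp
  show (1 / (s.b - s.a)) * (∫ t in s.a..s.b, s.φ (α t)) = _
  rw [show (fun t => s.φ (α t)) = fun t => ∑ p : X, s.φ p * (indC p) (α t) from funext hpt]
  rw [intervalIntegral.integral_finset_sum (fun p _ => (hint p).const_mul _)]
  rw [Finset.mul_sum]
  refine Finset.sum_congr rfl fun p _ => ?_
  rw [intervalIntegral.integral_const_mul]
  show 1 / (s.b - s.a) * (s.φ p * ∫ x in s.a..s.b, (indC p) (α x)) =
    s.φ p * (1 / (s.b - s.a) * ∫ x in s.a..s.b, (indC p) (α x))
  ring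

/-- Coordinates of elements of `H(X)` at nonnegative test functions are nonnegative. -/
lemma HSet_nonneg {X : Type u} [TopologicalSpace X] {γ : SIdx X → ℝ} (hγ : γ ∈ HSet X)
    (s : SIdx X) (hφ : ∀ x, 0 ≤ s.φ x) : 0 ≤ γ s := by
  have hcl : IsClosed {x : SIdx X → ℝ | 0 ≤ x s} :=
    isClosed_le continuous_const (continuous_apply s)
  refine closure_minimal ?_ hcl hγ
  rintro _ ⟨α, hα, rfl⟩
  have hI : 0 ≤ ∫ t in s.a..s.b, s.φ (α t) :=
    intervalIntegral.integral_nonneg s.hab.le fun u _ => hφ _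
  exact mul_nonneg (one_div_nonneg.2 (by linarith [s.hab])) hI

open MeasureTheory in
/-- Interval additivity of coordinates of elements of `H(X)`. -/
lemma HSet_additive {X : Type u} [TopologicalSpace X] {γ : SIdx X → ℝ} (hγ : γ ∈ HSet X)
    (φ : C(X, ℝ)) {a c b : ℝ} (ha : 0 ≤ a) (hac : a < c) (hcb : c < b) (hb : b ≤ 1) :
    (b - a) * γ ⟨φ, a, b, ha, hac.trans hcb, hb⟩ =
      (c - a) * γ ⟨φ, a, c, ha, hac, hcb.le.trans hb⟩ +
      (b - c) * γ ⟨φ, c, b, ha.trans hac.le, hcb, hb⟩ := by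
  have hcl : IsClosed {x : SIdx X → ℝ |
      (b - a) * x ⟨φ, a, b, ha, hac.trans hcb, hb⟩ =
      (c - a) * x ⟨φ, a, c, ha, hac, hcb.le.trans hb⟩ +
      (b - c) * x ⟨φ, c, b, ha.trans hac.le, hcb, hb⟩} :=
    isClosed_eq (continuous_const.mul (continuous_apply _))
      ((continuous_const.mul (continuous_apply _)).add (continuous_const.mul (continuous_apply _)))
  refine closure_minimal ?_ hcl hγ
  rintro _ ⟨α, hα, rfl⟩
  have hi1 : IntervalIntegrable (fun t => φ (α t)) volume a c :=
    isStep_intervalIntegrable hα φ ha (by linarith) (by linarith) (by linarith)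
  have hi2 : IntervalIntegrable (fun t => φ (α t)) volume c b :=
    isStep_intervalIntegrable hα φ (by linarith) (by linarith) (by linarith) hb
  show (b - a) * ((1 / (b - a)) * ∫ t in a..b, φ (α t)) =
    (c - a) * ((1 / (c - a)) * ∫ t in a..c, φ (α t)) +
    (b - c) * ((1 / (b - c)) * ∫ t in c..b, φ (α t))
  have e : ∀ {x : ℝ} (I : ℝ), x ≠ 0 → x * (1 / x * I) = I := by
    intro x I hx; field_simp
  rw [e _ (sub_ne_zero_of_ne (hac.trans hcb).ne'), e _ (sub_ne_zero_of_ne hac.ne'),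
    e _ (sub_ne_zero_of_ne hcb.ne')]
  exact (intervalIntegral.integral_add_adjacent_intervals hi1 hi2).symm

lemma stepIdxNat_mem {n : ℕ} (hn : n ≠ 0) {a : ℝ} (ha : 0 ≤ a) (ha1 : a < 1) :
    stepIdxNat n a < n ∧ ((stepIdxNat n a : ℝ)) / n ≤ a ∧ a < ((stepIdxNat n a : ℝ) + 1) / n := by
  have hnR : (0 : ℝ) < n := by exact_mod_cast Nat.pos_of_ne_zero hn
  have hflt : ⌊a * n⌋₊ < n := by
    rw [Nat.floor_lt (by positivity)]
    calc a * n < 1 * n := mul_lt_mul_of_pos_right ha1 hnR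
      _ = n := one_mul _
  have hseq : stepIdxNat n a = ⌊a * n⌋₊ := by unfold stepIdxNat; omega
  refine ⟨hseq ▸ hflt, ?_, ?_⟩
  · rw [hseq, div_le_iff₀ hnR]
    exact Nat.floor_le (by positivity)
  · rw [hseq, lt_div_iff₀ hnR]
    have := Nat.lt_floor_add_one (a * n)
    linarith

/-- On an interval where `β` is constantly `jF`, the coordinates of `γ` are given by
evaluation at `(jF, jF)`. -/
lemma gamma_cell (n : ℕ) [NeZero n] {γ : SIdx (Fin n × Fin n) → ℝ}
    (hγ : γ ∈ HSet (Fin n × Fin n))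
    (h1 : reindex (⟨Prod.fst, continuous_fst⟩ : C(Fin n × Fin n, Fin n)) γ = eHM (stepIdx n))
    (h2 : reindex (⟨Prod.snd, continuous_snd⟩ : C(Fin n × Fin n, Fin n)) γ = eHM (stepIdx n))
    {a b : ℝ} (ha : 0 ≤ a) (hab : a < b) (hb : b ≤ 1) (jF : Fin n)
    (hcell : ∀ t ∈ Set.Ico a b, stepIdx n t = jF) (φ : C(Fin n × Fin n, ℝ)) :
    γ ⟨φ, a, b, ha, hab, hb⟩ = φ (jF, jF) := by
  classical
  set m : Fin n × Fin n → ℝ := fun p => γ ⟨indC p, a, b, ha, hab, hb⟩ with hm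
  have hm0 : ∀ p, 0 ≤ m p := fun p => HSet_nonneg hγ _ (fun x => indC_nonneg p x)
  have hmarg : ∀ ψ : C(Fin n, ℝ), ∀ (f : C(Fin n × Fin n, Fin n)),
      reindex f γ = eHM (stepIdx n) →
      ∑ p : Fin n × Fin n, ψ (f p) * m p = ψ jF := by
    intro ψ f hf
    have hco := congrFun hf ⟨ψ, a, b, ha, hab, hb⟩
    have hR : eHM (stepIdx n) ⟨ψ, a, b, ha, hab, hb⟩ = ψ jF := by
      show (1 / (b - a)) * (∫ t in a..b, ψ (stepIdx n t)) = ψ jF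
      rw [integral_eq_of_eqOn_Ico hab.le (fun t ht => by rw [hcell t ht])]
      have hba : b - a ≠ 0 := sub_ne_zero_of_ne hab.ne'
      field_simp
    have hγf : γ ⟨ψ.comp f, a, b, ha, hab, hb⟩ = ψ jF := by
      rw [← hR, ← hco]; rfl
    have hlin := HSet_linear hγ ⟨ψ.comp f, a, b, ha, hab, hb⟩
    rw [← hγf, hlin]
    rfl
  have hzero : ∀ p : Fin n × Fin n, p ≠ (jF, jF) → m p = 0 := by
    intro p hp
    have hcases : p.1 ≠ jF ∨ p.2 ≠ jF := by
      by_contra hcon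
      push_neg at hcon
      exact hp (Prod.ext hcon.1 hcon.2)
    have key : ∀ (f : C(Fin n × Fin n, Fin n)), reindex f γ = eHM (stepIdx n) →
        f p ≠ jF → m p = 0 := by
      intro f hf hne
      have hsum := hmarg (indC (f p)) f hf
      have hval : (indC (f p) : C(Fin n, ℝ)) jF = 0 := by
        simp [indC, Ne.symm hne]
      rw [hval] at hsum
      have hterms : ∀ q ∈ Finset.univ, (0 : ℝ) ≤ (indC (f p)) (f q) * m q :=
        fun q _ => mul_nonneg (indC_nonneg _ _) (hm0 q)
      have := (Finset.sum_eq_zero_iff_of_nonneg hterms).1 hsum p (Finset.mem_univ p)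
      simpa [indC] using this
    rcases hcases with hne | hne
    · exact key ⟨Prod.fst, continuous_fst⟩ h1 hne
    · exact key ⟨Prod.snd, continuous_snd⟩ h2 hne
  have hone : m (jF, jF) = 1 := by
    have hsum := hmarg (indC jF) ⟨Prod.fst, continuous_fst⟩ h1
    have hval : (indC jF : C(Fin n, ℝ)) jF = 1 := by simp [indC]
    rw [hval, Finset.sum_eq_single (jF, jF)] at hsum
    · simpa [indC] using hsum
    · intro q _ hq
      rw [hzero q hq, mul_zero]
    · intro h
      exact absurd (Finset.mem_univ _) h
  have hlin := HSet_linear hγ ⟨φ, a, b, ha, hab, hb⟩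
  rw [hlin, Finset.sum_eq_single (jF, jF)]
  · show φ (jF, jF) * m (jF, jF) = φ (jF, jF)
    rw [hone, mul_one]
  · intro q _ hq
    show φ q * m q = 0
    rw [hzero q hq, mul_zero]
  · intro h
    exact absurd (Finset.mem_univ _) h

open MeasureTheory in
/-- The key identity: the coordinates of `γ` agree with those of `e(α)` for the
diagonal step function `α`. -/
lemma gamma_integral (n : ℕ) [NeZero n] {γ : SIdx (Fin n × Fin n) → ℝ}
    (hγ : γ ∈ HSet (Fin n × Fin n))
    (h1 : reindex (⟨Prod.fst, continuous_fst⟩ : C(Fin n × Fin n, Fin n)) γ = eHM (stepIdx n))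
    (h2 : reindex (⟨Prod.snd, continuous_snd⟩ : C(Fin n × Fin n, Fin n)) γ = eHM (stepIdx n)) :
    ∀ (m : ℕ) (a b : ℝ) (ha : 0 ≤ a) (hab : a < b) (hb : b ≤ 1),
      n ≤ stepIdxNat n a + m → ∀ φ : C(Fin n × Fin n, ℝ),
      (b - a) * γ ⟨φ, a, b, ha, hab, hb⟩ = ∫ t in a..b, φ (alphaDiag n t) := by
  have hn0 : n ≠ 0 := NeZero.ne n
  have hnR : (0 : ℝ) < n := by exact_mod_cast Nat.pos_of_ne_zero hn0
  intro m
  induction m with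
  | zero =>
    intro a b ha hab hb hmn φ
    exfalso
    have : stepIdxNat n a ≤ n - 1 := min_le_right _ _
    omega
  | succ m ih =>
    intro a b ha hab hb hmn φ
    have ha1 : a < 1 := lt_of_lt_of_le hab hb
    obtain ⟨hjn, hjle, hjlt⟩ := stepIdxNat_mem hn0 ha ha1
    set j := stepIdxNat n a with hj
    set c : ℝ := ((j : ℝ) + 1) / n with hcdef
    have hac : a < c := hjlt
    have hcell : ∀ t ∈ Set.Ico a c, stepIdx n t = ⟨j, hjn⟩ := by
      intro t ht
      exact Fin.ext (stepIdxNat_eq hjn (hjle.trans ht.1) ht.2)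
    by_cases hbc : b ≤ c
    · have hcell' : ∀ t ∈ Set.Ico a b, stepIdx n t = ⟨j, hjn⟩ :=
        fun t ht => hcell t ⟨ht.1, lt_of_lt_of_le ht.2 hbc⟩
      rw [gamma_cell n hγ h1 h2 ha hab hb ⟨j, hjn⟩ hcell' φ]
      rw [integral_eq_of_eqOn_Ico hab.le (c := φ (⟨j, hjn⟩, ⟨j, hjn⟩)) (fun t ht => by
        show φ (stepIdx n t, stepIdx n t) = _
        rw [hcell' t ht])]
    · push_neg at hbc
      have hcb : c < b := hbc
      have hca : 0 ≤ c := le_trans ha hac.le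
      have hc1 : c ≤ 1 := (hcb.le.trans hb)
      have hAdd : (b - a) * γ ⟨φ, a, b, ha, hab, hb⟩ =
          (c - a) * γ ⟨φ, a, c, ha, hac, hc1⟩ + (b - c) * γ ⟨φ, c, b, hca, hcb, hb⟩ :=
        HSet_additive hγ φ ha hac hcb hb
      have hleft : γ ⟨φ, a, c, ha, hac, hc1⟩ = φ (⟨j, hjn⟩, ⟨j, hjn⟩) :=
        gamma_cell n hγ h1 h2 ha hac hc1 ⟨j, hjn⟩ hcell φ
      have hjn' : j + 1 < n := by
        by_contra hcon
        push_neg at hcon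
        have hje : j + 1 = n := by omega
        have : c = 1 := by
          rw [hcdef]
          rw [show ((j : ℝ) + 1) = (n : ℝ) by exact_mod_cast congrArg (Nat.cast : ℕ → ℝ) hje]
          field_simp
        linarith [lt_of_lt_of_le hcb hb]
      have hstep_c : stepIdxNat n c = j + 1 := by
        apply stepIdxNat_eq hjn'
        · rw [hcdef]
          push_cast
          exact le_rfl
        · rw [hcdef]
          push_cast
          exact (div_lt_div_iff_of_pos_right hnR).mpr (by linarith)
      have hrec : γ ⟨φ, c, b, hca, hcb, hb⟩ =
          (1 / (b - c)) * ∫ t in c..b, φ (alphaDiag n t) := by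
        have h' := ih c b hca hcb hb (by rw [hstep_c]; omega) φ
        have hbc0 : b - c ≠ 0 := sub_ne_zero_of_ne hcb.ne'
        field_simp at h' ⊢
        linarith [h']
      rw [hAdd, hleft, hrec]
      rw [show (b - c) * ((1 / (b - c)) * ∫ t in c..b, φ (alphaDiag n t)) =
        ∫ t in c..b, φ (alphaDiag n t) by
          have hbc0 : b - c ≠ 0 := sub_ne_zero_of_ne hcb.ne'
          field_simp]
      have hlcalc : (c - a) * φ (⟨j, hjn⟩, ⟨j, hjn⟩) = ∫ t in a..c, φ (alphaDiag n t) := by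
        rw [integral_eq_of_eqOn_Ico hac.le (c := φ (⟨j, hjn⟩, ⟨j, hjn⟩)) (fun t ht => by
          show φ (stepIdx n t, stepIdx n t) = _
          rw [hcell t ht])]
      rw [hlcalc]
      have hi1 : IntervalIntegrable (fun t => φ (alphaDiag n t)) volume a c :=
        isStep_intervalIntegrable (isStep_alphaDiag n) φ ha (by linarith) hca hc1
      have hi2 : IntervalIntegrable (fun t => φ (alphaDiag n t)) volume c b :=
        isStep_intervalIntegrable (isStep_alphaDiag n) φ hca hc1 (by linarith) hb
      exact intervalIntegral.integral_add_adjacent_intervals hi1 hi2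

/-- If `γ ∈ H(K_n × K_n)` is mapped by both `H(pr_1)` and `H(pr_2)` to `e(β)`,
then the support of `γ` is contained in the diagonal of `K_n × K_n`. -/
theorem supp_subset_diagonal (n : ℕ) [NeZero n] (γ : SIdx (Fin n × Fin n) → ℝ)
    (hγ : γ ∈ HSet (Fin n × Fin n))
    (h1 : reindex (⟨Prod.fst, continuous_fst⟩ : C(Fin n × Fin n, Fin n)) γ = eHM (stepIdx n))
    (h2 : reindex (⟨Prod.snd, continuous_snd⟩ : C(Fin n × Fin n, Fin n)) γ = eHM (stepIdx n)) :
    suppH γ ⊆ {p : Fin n × Fin n | p.1 = p.2} := by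
  have hγeq : γ = eHM (alphaDiag n) := by
    funext s
    obtain ⟨φ, a, b, ha, hab, hb⟩ := s
    have h := gamma_integral n hγ h1 h2 n a b ha hab hb (Nat.le_add_left n _) φ
    have hba : b - a ≠ 0 := sub_ne_zero_of_ne hab.ne'
    show γ ⟨φ, a, b, ha, hab, hb⟩ = (1 / (b - a)) * ∫ t in a..b, φ (alphaDiag n t)
    rw [show γ ⟨φ, a, b, ha, hab, hb⟩ =
      (1 / (b - a)) * ((b - a) * γ ⟨φ, a, b, ha, hab, hb⟩) by field_simp, h]
  have hdiag : IsClosed {p : Fin n × Fin n | p.1 = p.2} := isClosed_discrete _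
  have hmem : γ ∈ HSetOn (Fin n × Fin n) {p : Fin n × Fin n | p.1 = p.2} := by
    rw [hγeq]
    exact subset_closure ⟨alphaDiag n, ⟨isStep_alphaDiag n, fun t _ => rfl⟩, rfl⟩
  exact Set.sInter_subset_of_mem ⟨hdiag, hmem⟩
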